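/- Let h, k : ℝ → ℝ be twice continuously differentiable and let f : ℝ² → ℝ be twice continuously differentiable and satisfy the wave equation ∂²f/∂u² = ∂²f/∂v² at every point. Define g : ℝ² → ℝ by g(x,y) = f( (h(x+y) − k(−x+y))/2 , (h(x+y) + k(−x+y))/2 ). Then g satisfies the wave equation ∂²g/∂x² = ∂²g/∂y² at every point. -/

import Mathlib

noncomputable def LX : ℝ × ℝ →L[ℝ] ℝ := ContinuousLinearMap.fst ℝ ℝ ℝ + ContinuousLinearMap.snd ℝ ℝ ℝ
noncomputable def LY : ℝ × ℝ →L[ℝ] ℝ := ContinuousLinearMap.snd ℝ ℝ ℝ - ContinuousLinearMap.fst ℝ ℝ ℝ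

@[simp] lemma LX_apply (p : ℝ × ℝ) : LX p = p.1 + p.2 := rfl
@[simp] lemma LY_apply (p : ℝ × ℝ) : LY p = -p.1 + p.2 := by
  simp [LY, sub_eq_add_neg]; ring

lemma hasFDerivAt_comp_clm {c : ℝ → ℝ} (L : ℝ × ℝ →L[ℝ] ℝ) {p : ℝ × ℝ}
    (hc : DifferentiableAt ℝ c (L p)) :
    HasFDerivAt (fun q => c (L q)) (deriv c (L p) • L) p := by
  have h1 := (hc.hasDerivAt.hasFDerivAt).comp p L.hasFDerivAt
  refine h1.congr_fderiv ?_
  refine ContinuousLinearMap.ext fun v => ?_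
  simp [mul_comm]

lemma hasFDerivAt_half_sub {c d : ℝ → ℝ} {p : ℝ × ℝ}
    (hc : DifferentiableAt ℝ c (LX p)) (hd : DifferentiableAt ℝ d (LY p)) :
    HasFDerivAt (fun q => (c (LX q) - d (LY q)) / 2)
      ((1/2 : ℝ) • (deriv c (LX p) • LX - deriv d (LY p) • LY)) p := by
  have h1 := ((hasFDerivAt_comp_clm LX hc).sub (hasFDerivAt_comp_clm LY hd)).const_smul (1/2 : ℝ)
  have h2 : (fun q => (c (LX q) - d (LY q)) / 2)
      = fun q => (1/2 : ℝ) • (c (LX q) - d (LY q)) := by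
    funext q; rw [smul_eq_mul]; ring
  rw [h2]; exact h1

lemma hasFDerivAt_half_add {c d : ℝ → ℝ} {p : ℝ × ℝ}
    (hc : DifferentiableAt ℝ c (LX p)) (hd : DifferentiableAt ℝ d (LY p)) :
    HasFDerivAt (fun q => (c (LX q) + d (LY q)) / 2)
      ((1/2 : ℝ) • (deriv c (LX p) • LX + deriv d (LY p) • LY)) p := by
  have h1 := ((hasFDerivAt_comp_clm LX hc).add (hasFDerivAt_comp_clm LY hd)).const_smul (1/2 : ℝ)
  have h2 : (fun q => (c (LX q) + d (LY q)) / 2)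
      = fun q => (1/2 : ℝ) • (c (LX q) + d (LY q)) := by
    funext q; rw [smul_eq_mul]; ring
  rw [h2]; exact h1

/-- The conformal map in characteristic form. -/
noncomputable def phi (h k : ℝ → ℝ) (q : ℝ × ℝ) : ℝ × ℝ :=
  ((h (LX q) - k (LY q)) / 2, (h (LX q) + k (LY q)) / 2)

noncomputable def Du (h k : ℝ → ℝ) (p : ℝ × ℝ) : ℝ × ℝ →L[ℝ] ℝ :=
  (1/2 : ℝ) • (deriv h (LX p) • LX - deriv k (LY p) • LY)

noncomputable def Dv (h k : ℝ → ℝ) (p : ℝ × ℝ) : ℝ × ℝ →L[ℝ] ℝ :=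
  (1/2 : ℝ) • (deriv h (LX p) • LX + deriv k (LY p) • LY)

lemma hasFDerivAt_phi {h k : ℝ → ℝ} (hh : Differentiable ℝ h) (hk : Differentiable ℝ k)
    (p : ℝ × ℝ) :
    HasFDerivAt (phi h k) ((Du h k p).prod (Dv h k p)) p :=
  (hasFDerivAt_half_sub (hh (LX p)) (hk (LY p))).prodMk
    (hasFDerivAt_half_add (hh (LX p)) (hk (LY p)))

lemma fderiv_fderiv_apply {f : ℝ × ℝ → ℝ} (hf : ContDiff ℝ 2 f) (p v w : ℝ × ℝ) :
    fderiv ℝ (fun q => fderiv ℝ f q v) p w = fderiv ℝ (fderiv ℝ f) p w v := by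
  have hd : DifferentiableAt ℝ (fderiv ℝ f) p :=
    ((hf.fderiv_right (m := 1) (by norm_num)).differentiable (by norm_num)).differentiableAt
  rw [fderiv_clm_apply hd (differentiableAt_const v)]
  simp

lemma bilin_swap (T : ℝ × ℝ →L[ℝ] (ℝ × ℝ →L[ℝ] ℝ))
    (hT : T (1, 0) (1, 0) = T (0, 1) (0, 1)) (a b : ℝ) :
    T (a, b) (a, b) = T (b, a) (b, a) := by
  have h1 : ((a : ℝ), (b : ℝ)) = a • ((1 : ℝ), (0 : ℝ)) + b • ((0 : ℝ), (1 : ℝ)) := by simp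
  have h2 : ((b : ℝ), (a : ℝ)) = b • ((1 : ℝ), (0 : ℝ)) + a • ((0 : ℝ), (1 : ℝ)) := by simp
  rw [h1, h2]
  simp only [map_add, map_smul, ContinuousLinearMap.add_apply,
    ContinuousLinearMap.smul_apply, smul_eq_mul]
  linear_combination (a^2 - b^2) * hT

/-- Second partial derivative of `f : ℝ × ℝ → ℝ` in the first variable. -/
noncomputable def pdxx (f : ℝ × ℝ → ℝ) (p : ℝ × ℝ) : ℝ :=
  fderiv ℝ (fun q => fderiv ℝ f q (1, 0)) p (1, 0)

/-- Second partial derivative of `f : ℝ × ℝ → ℝ` in the second variable. -/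
noncomputable def pdyy (f : ℝ × ℝ → ℝ) (p : ℝ × ℝ) : ℝ :=
  fderiv ℝ (fun q => fderiv ℝ f q (0, 1)) p (0, 1)

/-- A Lorentz-conformal transformation `(x,y) ↦ ((h(x+y) − k(−x+y))/2, (h(x+y) + k(−x+y))/2)`
preserves the wave equation. -/
theorem lorentz_conformal_preserves_wave_equation
    (h k : ℝ → ℝ) (hh : ContDiff ℝ 2 h) (hk : ContDiff ℝ 2 k)
    (f : ℝ × ℝ → ℝ) (hf : ContDiff ℝ 2 f)
    (hwave : ∀ p : ℝ × ℝ, pdxx f p = pdyy f p)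
    (g : ℝ × ℝ → ℝ)
    (hg : ∀ p : ℝ × ℝ,
      g p = f ((h (p.1 + p.2) - k (-p.1 + p.2)) / 2,
               (h (p.1 + p.2) + k (-p.1 + p.2)) / 2)) :
    ∀ p : ℝ × ℝ, pdxx g p = pdyy g p := by
  -- basic differentiability facts
  have hh1 : Differentiable ℝ h := hh.differentiable (by norm_num)
  have hk1 : Differentiable ℝ k := hk.differentiable (by norm_num)
  have hf1 : Differentiable ℝ f := hf.differentiable (by norm_num)
  have hh' : ContDiff ℝ 1 (deriv h) := (contDiff_succ_iff_deriv.mp hh).2.2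
  have hk' : ContDiff ℝ 1 (deriv k) := (contDiff_succ_iff_deriv.mp hk).2.2
  have hh'1 : Differentiable ℝ (deriv h) := hh'.differentiable (by norm_num)
  have hk'1 : Differentiable ℝ (deriv k) := hk'.differentiable (by norm_num)
  have hf' : Differentiable ℝ (fderiv ℝ f) :=
    (hf.fderiv_right (m := 1) (by norm_num)).differentiable (by norm_num)
  -- g is f ∘ phi
  have hgf : g = fun q => f (phi h k q) := by
    funext q
    rw [hg q]
    have e : -q.1 + q.2 = LY q := by simp
    rw [e]; rfl
  -- derivative of g
  have hDg : ∀ q, HasFDerivAt g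
      ((fderiv ℝ f (phi h k q)).comp ((Du h k q).prod (Dv h k q))) q := by
    intro q
    rw [hgf]
    exact ((hf1 (phi h k q)).hasFDerivAt).comp q (hasFDerivAt_phi hh1 hk1 q)
  -- abbreviations for the conformal factors
  set aa : ℝ × ℝ → ℝ := fun q => (deriv h (LX q) + deriv k (LY q)) / 2 with haa
  set bb : ℝ × ℝ → ℝ := fun q => (deriv h (LX q) - deriv k (LY q)) / 2 with hbb
  have eDphi1 : ∀ q, ((Du h k q).prod (Dv h k q)) (1, 0) = (aa q, bb q) := by
    intro q
    simp [Du, Dv, haa, hbb, Prod.ext_iff]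
    constructor <;> ring
  have eDphi2 : ∀ q, ((Du h k q).prod (Dv h k q)) (0, 1) = (bb q, aa q) := by
    intro q
    simp [Du, Dv, haa, hbb, Prod.ext_iff]
    constructor <;> ring
  have e1 : (fun q => fderiv ℝ g q (1, 0))
      = fun q => fderiv ℝ f (phi h k q) (aa q, bb q) := by
    funext q
    rw [(hDg q).fderiv, ContinuousLinearMap.comp_apply, eDphi1 q]
  have e2 : (fun q => fderiv ℝ g q (0, 1))
      = fun q => fderiv ℝ f (phi h k q) (bb q, aa q) := by
    funext q
    rw [(hDg q).fderiv, ContinuousLinearMap.comp_apply, eDphi2 q]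
  intro p
  -- derivative of q ↦ fderiv f (phi q)
  have hc : HasFDerivAt (fun q => fderiv ℝ f (phi h k q))
      ((fderiv ℝ (fderiv ℝ f) (phi h k p)).comp ((Du h k p).prod (Dv h k p))) p :=
    ((hf' (phi h k p)).hasFDerivAt).comp p (hasFDerivAt_phi hh1 hk1 p)
  -- derivatives of aa and bb
  have hDaa : HasFDerivAt aa
      ((1/2 : ℝ) • (deriv (deriv h) (LX p) • LX + deriv (deriv k) (LY p) • LY)) p :=
    hasFDerivAt_half_add (hh'1 _) (hk'1 _)
  have hDbb : HasFDerivAt bb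
      ((1/2 : ℝ) • (deriv (deriv h) (LX p) • LX - deriv (deriv k) (LY p) • LY)) p :=
    hasFDerivAt_half_sub (hh'1 _) (hk'1 _)
  have hu1 : HasFDerivAt (fun q => ((aa q : ℝ), (bb q : ℝ)))
      (((1/2 : ℝ) • (deriv (deriv h) (LX p) • LX + deriv (deriv k) (LY p) • LY)).prod
       ((1/2 : ℝ) • (deriv (deriv h) (LX p) • LX - deriv (deriv k) (LY p) • LY))) p :=
    hDaa.prodMk hDbb
  have hu2 : HasFDerivAt (fun q => ((bb q : ℝ), (aa q : ℝ)))
      (((1/2 : ℝ) • (deriv (deriv h) (LX p) • LX - deriv (deriv k) (LY p) • LY)).prod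
       ((1/2 : ℝ) • (deriv (deriv h) (LX p) • LX + deriv (deriv k) (LY p) • LY))) p :=
    hDbb.prodMk hDaa
  have hA := hc.clm_apply hu1
  have hB := hc.clm_apply hu2
  have hT : fderiv ℝ (fderiv ℝ f) (phi h k p) (1, 0) (1, 0)
      = fderiv ℝ (fderiv ℝ f) (phi h k p) (0, 1) (0, 1) := by
    rw [← fderiv_fderiv_apply hf, ← fderiv_fderiv_apply hf]
    exact hwave (phi h k p)
  have key := bilin_swap (fderiv ℝ (fderiv ℝ f) (phi h k p)) hT (aa p) (bb p)
  -- now compute both sides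
  unfold pdxx pdyy
  rw [e1, e2, hA.fderiv, hB.fderiv]
  simp only [ContinuousLinearMap.add_apply, ContinuousLinearMap.comp_apply,
    ContinuousLinearMap.flip_apply, ContinuousLinearMap.prod_apply,
    ContinuousLinearMap.smul_apply, ContinuousLinearMap.sub_apply,
    ContinuousLinearMap.coe_smul', Pi.smul_apply, smul_eq_mul]
  have r1 : ((Du h k p) (1, 0), (Dv h k p) (1, 0)) = (aa p, bb p) := eDphi1 p
  have r2 : ((Du h k p) (0, 1), (Dv h k p) (0, 1)) = (bb p, aa p) := eDphi2 p
  rw [r1, r2, key]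
  congr 2
  all_goals simp only [LX_apply, LY_apply]
  all_goals norm_num
  all_goals ring
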